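/- Let D = (V, A) be a directed graph with solid graph G, and suppose (G, λ) is an undirected temporal graph realizing D via strict temporal paths. Let v be a vertex of G and w ∈ N_G(v) a solid neighbor of v such that w has no outgoing arc in A to any other solid neighbor of v (i.e., for all x ∈ N_G(v) \ {w}, (w,x) ∉ A). Then λ({v,w}) ≠ ∅, i.e., the edge {v,w} receives at least one label in every realization. -/
import Mathlib


/-- Strict temporal reachability: `SReach lab u v t` means there is a walk from `u` to `v`
whose steps carry strictly increasing labels, arriving at time `t`. -/
inductive SReach {V : Type*} (lab : V → V → Finset ℕ) : V → V → ℕ → Prop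
  | single {u v : V} {t : ℕ} (h : t ∈ lab u v) : SReach lab u v t
  | cons {u v w : V} {t t' : ℕ} (h : SReach lab u v t) (h' : t' ∈ lab v w) (hlt : t < t') :
      SReach lab u w t'

/-- `u` can reach `v` via a strict temporal path. -/
def StrictReachable {V : Type*} (lab : V → V → Finset ℕ) (u v : V) : Prop :=
  ∃ t, SReach lab u v t

/-- Non-strict temporal reachability: labels are non-decreasing along the walk. -/
inductive NSReach {V : Type*} (lab : V → V → Finset ℕ) : V → V → ℕ → Prop
  | single {u v : V} {t : ℕ} (h : t ∈ lab u v) : NSReach lab u v t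
  | cons {u v w : V} {t t' : ℕ} (h : NSReach lab u v t) (h' : t' ∈ lab v w) (hle : t ≤ t') :
      NSReach lab u w t'

/-- `u` can reach `v` via a non-strict temporal path. -/
def NonStrictReachable {V : Type*} (lab : V → V → Finset ℕ) (u v : V) : Prop :=
  ∃ t, NSReach lab u v t

/-- If a solid neighbor `w` of `v` has no outgoing arc to any other solid neighbor of `v`,
then the edge `{v, w}` receives at least one label in every realization. -/
theorem stmt12 {V : Type*} (G : SimpleGraph V) (A : V → V → Prop)
    (lab : V → V → Finset ℕ)
    (hG : ∀ x y, G.Adj x y ↔ x ≠ y ∧ A x y ∧ A y x)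
    (hsymm : ∀ x y, lab x y = lab y x)
    (hsupp : ∀ x y, (lab x y).Nonempty → G.Adj x y)
    (hreal : ∀ x y, A x y ↔ x ≠ y ∧ StrictReachable lab x y)
    (v w : V) (hadj : G.Adj v w)
    (hout : ∀ x, G.Adj v x → x ≠ w → ¬ A w x) :
    (lab v w).Nonempty := by
  have hAwv : A w v := ((hG v w).mp hadj).2.2
  obtain ⟨hne, t, hsr⟩ := (hreal w v).mp hAwv
  cases hsr with
  | single h => exact ⟨t, (hsymm v w) ▸ h⟩
  | cons h h' hlt =>
    rename_i x t0
    by_cases hxw : x = w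
    · exact ⟨_, by rw [hsymm v w, ← hxw]; exact h'⟩
    · exfalso
      have hGxv : G.Adj x v := hsupp x v ⟨_, h'⟩
      have hAwx : A w x := (hreal w x).mpr ⟨Ne.symm hxw, t0, h⟩
      exact hout x hGxv.symm hxw hAwx
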